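/- For every t, a, s, n ∈ ℕ with n ≥ 1 and s ≥ n+3, one has F_t(a, s, 0, n) + F_t(a, s, 0, n−1) = F_t(a+t+1, s, s−n−3, n). -/
import Mathlib


open Finset

noncomputable section

/-- Binomial coefficient `C(a,k)` with integer arguments; zero if `k < 0` or `a < k`. -/
def Cb (a k : ℤ) : ℤ := if 0 ≤ k ∧ k ≤ a then (Nat.choose a.toNat k.toNat : ℤ) else 0

/-- The recursively defined function `F_t(a, s, ε, n)`. -/
def Fb : ℕ → ℤ → ℕ → ℕ → ℤ → ℤ
  | 0, a, _, _, n => Cb a n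
  | (t+1), a, s, e, n =>
      if n < 0 then 0 else
      Cb a n
        + ∑ j ∈ Finset.range (t+1), Cb ((s : ℤ) - n - 4 + (j+1)) (j+1) * Cb (a + (j+1)) n
        - ∑ j ∈ Finset.range (t+1), Cb (e : ℤ) (j+1) * Fb (t - j) a s e (n - (j+1))
  termination_by t _ _ _ _ => t
  decreasing_by omega

/-! ### Auxiliary definitions -/

/-- `G_t(a,s,n) = F_t(a,s,0,n)` in closed form. -/
def Gg (t : ℕ) (a : ℤ) (s : ℕ) (n : ℤ) : ℤ :=
  Cb a n + ∑ j ∈ Finset.range t, Cb ((s : ℤ) - n - 4 + (j+1)) (j+1) * Cb (a + (j+1)) n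

/-- Rising binomial coefficient `Ch e j = C(e+j-1, j)`, the coefficient of `x^j` in
`(1-x)^{-e}` (with `Ch e 0 = 1` even for `e = 0`). -/
def Ch (e j : ℕ) : ℕ := (e + j - 1).choose j

/-- An auxiliary convolution used in the inversion identity. -/
def Taux (e r : ℕ) : ℤ :=
  ∑ j ∈ Finset.range (r+1), (-1:ℤ)^j * (Ch (e+1) j : ℤ) * (e.choose (r - j) : ℤ)

/-- The alternating convolution of `choose e ·` with `Ch e ·`. -/
def Saux (e m : ℕ) : ℤ :=
  ∑ j ∈ Finset.range (m+1), (-1:ℤ)^j * (Ch e j : ℤ) * (e.choose (m - j) : ℤ)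

/-! ### Basic facts about `Cb` -/

lemma Cb_neg {a n : ℤ} (h : n < 0) : Cb a n = 0 := by
  unfold Cb; rw [if_neg]; omega

lemma Cb_natCast (a k : ℕ) : Cb (a : ℤ) (k : ℤ) = (a.choose k : ℤ) := by
  unfold Cb
  by_cases h : (k : ℤ) ≤ (a : ℤ)
  · rw [if_pos ⟨Int.natCast_nonneg k, h⟩, Int.toNat_natCast, Int.toNat_natCast]
  · rw [if_neg (by tauto), Nat.choose_eq_zero_of_lt (by exact_mod_cast not_le.mp h)]
    simp

lemma Cb_eq_zero_of_lt {a k : ℤ} (h : a < k) : Cb a k = 0 := by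
  unfold Cb; rw [if_neg]; omega

lemma Cb_zero_right {a : ℤ} (h : 0 ≤ a) : Cb a 0 = 1 := by
  unfold Cb; rw [if_pos ⟨le_refl 0, h⟩]; simp

/-- Pascal's rule for `Cb` with natural top. -/
lemma Cb_pascal (B : ℕ) (n : ℤ) :
    Cb ((B : ℤ) + 1) n = Cb (B : ℤ) n + Cb (B : ℤ) (n - 1) := by
  rcases lt_or_ge n 0 with hn | hn
  · rw [Cb_neg hn, Cb_neg hn, Cb_neg (by omega)]; ring
  · obtain ⟨m, rfl⟩ := Int.eq_ofNat_of_zero_le hn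
    cases m with
    | zero =>
      rw [show ((0:ℕ):ℤ) - 1 = (-1 : ℤ) by norm_num]
      rw [Cb_neg (by norm_num : (-1:ℤ) < 0)]
      rw [show ((B:ℤ) + 1) = ((B+1 : ℕ) : ℤ) by push_cast; ring]
      rw [Cb_natCast, Cb_natCast]; simp
    | succ m' =>
      rw [show ((B:ℤ) + 1) = ((B+1 : ℕ) : ℤ) by push_cast; ring,
        show ((m'+1 : ℕ) : ℤ) - 1 = ((m' : ℕ) : ℤ) by push_cast; ring]
      rw [Cb_natCast, Cb_natCast, Cb_natCast]
      rw [Nat.choose_succ_succ']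
      push_cast; ring

/-! ### Basic facts about `Ch` -/

lemma Ch_zero_right (e : ℕ) : Ch e 0 = 1 := by unfold Ch; exact Nat.choose_zero_right _

lemma Ch_zero_left {j : ℕ} (h : 1 ≤ j) : Ch 0 j = 0 := by
  unfold Ch
  exact Nat.choose_eq_zero_of_lt (by omega)

/-- Pascal in the second slot: `Ch (e+1) (j+1) = Ch e (j+1) + Ch (e+1) j`. -/
lemma Ch_pascal_right (e j : ℕ) : Ch (e+1) (j+1) = Ch e (j+1) + Ch (e+1) j := by
  unfold Ch
  rw [show e+1+(j+1)-1 = (e+j)+1 by omega, show e+(j+1)-1 = e+j by omega,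
    show e+1+j-1 = e+j by omega]
  rw [Nat.choose_succ_succ' (e+j) j]
  omega

/-- Pascal in the first slot: `Ch (c+1) (j+1) = Ch (c+1) j + Ch c (j+1)`. -/
lemma Ch_pascal_left (c j : ℕ) : Ch (c+1) (j+1) = Ch (c+1) j + Ch c (j+1) := by
  rw [Ch_pascal_right]; omega

/-! ### `Fb` with `ε = 0` -/

lemma Fb_neg : ∀ (t : ℕ) (a : ℤ) (s e : ℕ) {n : ℤ}, n < 0 → Fb t a s e n = 0 := by
  intro t a s e n hn
  cases t with
  | zero => simp only [Fb]; exact Cb_neg hn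
  | succ t => simp only [Fb]; rw [if_pos hn]

lemma Gg_neg {t : ℕ} {a : ℤ} {s : ℕ} {n : ℤ} (hn : n < 0) : Gg t a s n = 0 := by
  unfold Gg
  rw [Cb_neg hn]
  rw [Finset.sum_eq_zero fun j _ => by rw [Cb_neg hn, mul_zero]]
  ring

lemma Fb_eps_zero (t : ℕ) (a : ℤ) (s : ℕ) (n : ℤ) : Fb t a s 0 n = Gg t a s n := by
  cases t with
  | zero => simp only [Fb, Gg, Finset.range_zero, Finset.sum_empty, add_zero]
  | succ t =>
    rcases lt_or_ge n 0 with hn | hn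
    · rw [Fb_neg _ _ _ _ hn, Gg_neg hn]
    · simp only [Fb, if_neg (not_lt.mpr hn)]
      have h2 : (∑ j ∈ Finset.range (t+1),
          Cb (((0:ℕ)) : ℤ) ((j:ℤ)+1) * Fb (t - j) a s 0 (n - ((j:ℤ)+1))) = (0:ℤ) :=
        Finset.sum_eq_zero (fun j _ => by
          rw [Cb_eq_zero_of_lt (by push_cast; omega), zero_mul])
      rw [h2]
      unfold Gg; ring

/-! ### The recursion, rearranged: `(A')` -/

lemma Aprime (t : ℕ) (A : ℤ) (s e : ℕ) (n : ℤ) :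
    ∑ i ∈ Finset.range (t+1), Cb (e : ℤ) (i : ℤ) * Fb (t - i) A s e (n - i)
      = Gg t A s n := by
  rcases lt_or_ge n 0 with hn | hn
  · rw [Gg_neg hn, Finset.sum_eq_zero]
    intro i _
    rw [Fb_neg _ _ _ _ (by omega : n - (i:ℤ) < 0), mul_zero]
  · cases t with
    | zero =>
      rw [show (0:ℕ)+1 = 1 from rfl, Finset.sum_range_one]
      simp only [Nat.cast_zero, sub_zero, Nat.zero_sub]
      rw [Cb_zero_right (by positivity), one_mul]
      simp only [Fb, Gg, Finset.range_zero, Finset.sum_empty, add_zero]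
    | succ t =>
      rw [Finset.sum_range_succ']
      simp only [Nat.cast_zero, sub_zero, Nat.sub_zero]
      rw [Cb_zero_right (by positivity), one_mul]
      simp only [Fb, if_neg (not_lt.mpr hn)]
      have hsum : ∀ i ∈ Finset.range (t+1),
          Cb (e : ℤ) ((i+1 : ℕ) : ℤ) * Fb (t + 1 - (i+1)) A s e (n - ((i+1 : ℕ) : ℤ))
          = Cb (e : ℤ) ((i:ℤ)+1) * Fb (t - i) A s e (n - ((i:ℤ)+1)) := by
        intro i _
        have h1 : t + 1 - (i+1) = t - i := by omega
        have h2 : (((i:ℕ)+1 : ℕ) : ℤ) = (i:ℤ)+1 := by push_cast; ring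
        rw [h1, h2]
      rw [Finset.sum_congr rfl hsum]
      unfold Gg
      ring

/-! ### The inversion identity -/

lemma Taux_succ (e r : ℕ) : Taux e (r+1) = Saux e (r+1) - Taux e r := by
  have expand : Taux e (r+1) = ∑ j ∈ Finset.range (r+2),
      ((-1:ℤ)^j * (Ch e j : ℤ) * (e.choose (r+1 - j) : ℤ)
       + (-1:ℤ)^j * (if j = 0 then 0 else (Ch (e+1) (j-1) : ℤ)) * (e.choose (r+1 - j) : ℤ)) := by
    unfold Taux
    refine Finset.sum_congr rfl ?_
    intro j _
    rcases Nat.eq_zero_or_pos j with rfl | hj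
    · simp [Ch_zero_right]
    · obtain ⟨j', rfl⟩ := Nat.exists_eq_add_of_le hj
      rw [if_neg (by omega)]
      rw [show 1 + j' = j' + 1 by omega, Ch_pascal_right]
      push_cast
      ring_nf
  rw [expand, Finset.sum_add_distrib]
  have h2 : ∑ j ∈ Finset.range (r+2),
      (-1:ℤ)^j * (if j = 0 then 0 else (Ch (e+1) (j-1) : ℤ)) * (e.choose (r+1 - j) : ℤ)
      = - Taux e r := by
    rw [Finset.sum_range_succ']
    have h3 : ∀ j ∈ Finset.range (r+1),
        (-1:ℤ)^(j+1) * (if j + 1 = 0 then 0 else (Ch (e+1) (j+1-1) : ℤ)) * (e.choose (r+1 - (j+1)) : ℤ)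
        = -((-1:ℤ)^j * (Ch (e+1) j : ℤ) * (e.choose (r - j) : ℤ)) := by
      intro j _
      rw [if_neg (by omega)]
      have h4 : r + 1 - (j+1) = r - j := by omega
      rw [h4, show (j:ℕ)+1-1 = j from rfl]
      ring
    rw [Finset.sum_congr rfl h3, Finset.sum_neg_distrib]
    unfold Taux
    norm_num
  rw [h2]
  unfold Saux
  ring

lemma Saux_succ_eq (e m : ℕ) : Saux (e+1) (m+1) = Taux e (m+1) + Taux e m := by
  have expand : ∀ j ∈ Finset.range (m+2),
      (-1:ℤ)^j * (Ch (e+1) j : ℤ) * ((e+1).choose (m+1 - j) : ℤ)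
      = (-1:ℤ)^j * (Ch (e+1) j : ℤ) * (e.choose (m+1 - j) : ℤ)
        + (-1:ℤ)^j * (Ch (e+1) j : ℤ) *
           (if j = m+1 then 0 else (e.choose (m - j) : ℤ)) := by
    intro j hj
    rw [Finset.mem_range] at hj
    rcases Nat.eq_or_lt_of_le (Nat.lt_succ_iff.mp hj) with rfl | hlt
    · rw [if_pos rfl]; simp
    · rw [if_neg (by omega)]
      have h1 : m + 1 - j = (m - j) + 1 := by omega
      rw [h1, Nat.choose_succ_succ']
      push_cast; ring
  unfold Saux
  rw [Finset.sum_congr rfl expand, Finset.sum_add_distrib]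
  congr 1
  rw [Finset.sum_range_succ, if_pos rfl, mul_zero, add_zero]
  unfold Taux
  refine Finset.sum_congr rfl ?_
  intro j hj
  rw [Finset.mem_range] at hj
  rw [if_neg (by omega)]

lemma inv' (e m : ℕ) : Saux e m = if m = 0 then 1 else 0 := by
  induction e generalizing m with
  | zero =>
    unfold Saux
    rw [Finset.sum_eq_single 0]
    · simp only [pow_zero, Ch_zero_right, Nat.cast_one, one_mul, Nat.sub_zero]
      rcases Nat.eq_zero_or_pos m with rfl | h
      · simp
      · rw [if_neg (by omega), Nat.choose_eq_zero_of_lt h]; simp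
    · intro j _ hj
      rw [Ch_zero_left (by omega)]; simp
    · intro h; simp at h
  | succ e ih =>
    cases m with
    | zero =>
      unfold Saux
      simp [Ch_zero_right]
    | succ m =>
      rw [Saux_succ_eq, Taux_succ, ih (m+1)]
      simp only [Nat.succ_ne_zero, if_false]
      ring

/-! ### Inversion: closed form of `Fb` in terms of `Gg` -/

lemma Fb_inv (t : ℕ) (A : ℤ) (s e : ℕ) (n : ℤ) :
    Fb t A s e n
      = ∑ j ∈ Finset.range (t+1), (-1:ℤ)^j * (Ch e j : ℤ) * Gg (t - j) A s (n - j) := by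
  have key : ∀ j ∈ Finset.range (t+1),
      (-1:ℤ)^j * (Ch e j : ℤ) * Gg (t - j) A s (n - j)
      = ∑ i ∈ Finset.range ((t+1) - j),
          (-1:ℤ)^j * (Ch e j : ℤ) * (Cb (e:ℤ) (i:ℤ) * Fb (t - j - i) A s e (n - j - i)) := by
    intro j hj
    rw [Finset.mem_range] at hj
    rw [show (t+1) - j = (t - j) + 1 by omega]
    rw [← Finset.mul_sum, Aprime (t - j) A s e (n - j)]
  rw [Finset.sum_congr rfl key]
  rw [← Finset.sum_range_diag_flip (t+1)
    (fun j i => (-1:ℤ)^j * (Ch e j : ℤ) * (Cb (e:ℤ) (i:ℤ) * Fb (t - j - i) A s e (n - j - i)))]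
  have hm : ∀ m ∈ Finset.range (t+1),
      (∑ k ∈ Finset.range (m+1),
        (-1:ℤ)^k * (Ch e k : ℤ) * (Cb (e:ℤ) (((m - k : ℕ)):ℤ) * Fb (t - k - (m - k)) A s e (n - k - ((m - k : ℕ):ℤ))))
      = if m = 0 then Fb t A s e n else 0 := by
    intro m hmr
    rw [Finset.mem_range] at hmr
    have hinner : ∀ k ∈ Finset.range (m+1),
        (-1:ℤ)^k * (Ch e k : ℤ) * (Cb (e:ℤ) (((m - k : ℕ)):ℤ) * Fb (t - k - (m - k)) A s e (n - k - ((m - k : ℕ):ℤ)))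
        = ((-1:ℤ)^k * (Ch e k : ℤ) * (e.choose (m - k) : ℤ)) * Fb (t - m) A s e (n - m) := by
      intro k hk
      rw [Finset.mem_range] at hk
      have h1 : t - k - (m - k) = t - m := by omega
      have h2 : n - k - ((m - k : ℕ):ℤ) = n - m := by
        have h3 : ((m - k : ℕ):ℤ) = (m:ℤ) - (k:ℤ) := by
          rw [Int.ofNat_sub (by omega)]
        rw [h3]; ring
      rw [h1, h2, Cb_natCast]
      ring
    rw [Finset.sum_congr rfl hinner, ← Finset.sum_mul]
    have h4 : ∑ k ∈ Finset.range (m+1), (-1:ℤ)^k * (Ch e k : ℤ) * (e.choose (m - k) : ℤ)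
        = if m = 0 then 1 else 0 := inv' e m
    rw [h4]
    rcases Nat.eq_zero_or_pos m with rfl | hmp
    · simp
    · rw [if_neg (by omega), if_neg (by omega)]; ring
  rw [Finset.sum_congr rfl hm, Finset.sum_ite_eq' (Finset.range (t+1)) 0
    (fun _ => Fb t A s e n)]
  rw [if_pos (Finset.mem_range.mpr (by omega))]

/-! ### `Gg` in `Ch` form -/

lemma Gg_eq_sum_Ch (t' : ℕ) (A : ℤ) (s E : ℕ) (n' : ℤ)
    (hE : (s : ℤ) - n' - 3 = (E : ℤ)) :
    Gg t' A s n' = ∑ i ∈ Finset.range (t'+1), (Ch E i : ℤ) * Cb (A + i) n' := by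
  rw [Finset.sum_range_succ']
  unfold Gg
  have h0 : (Ch E 0 : ℤ) * Cb (A + ((0:ℕ):ℤ)) n' = Cb A n' := by
    rw [Ch_zero_right]
    norm_num
  rw [h0, add_comm (Cb A n')]
  congr 1
  refine Finset.sum_congr rfl ?_
  intro i _
  have h1 : (s : ℤ) - n' - 4 + ((i:ℤ)+1) = ((E + i : ℕ) : ℤ) := by push_cast; omega
  have h2 : Ch E (i+1) = (E + i).choose (i+1) := by unfold Ch; congr 1 <;> omega
  rw [h1, show ((i:ℤ)+1) = ((i+1 : ℕ) : ℤ) by omega, Cb_natCast, h2]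

/-! ### Lemma B -/

lemma lemB : ∀ (j e B : ℕ) (n : ℤ),
    ∑ l ∈ Finset.range (j+1),
      (-1:ℤ)^l * (Ch e l : ℤ) * (Ch (e+l) (j-l) : ℤ) * Cb (((B + (j-l) : ℕ)) : ℤ) (n - l)
    = (Ch e j : ℤ) * Cb (B : ℤ) n := by
  intro j
  induction j with
  | zero =>
    intro e B n
    simp [Ch_zero_right]
  | succ j ihj =>
    intro e
    induction e with
    | zero =>
      intro B n
      rw [Finset.sum_eq_single 0]
      · rw [Ch_zero_left (by omega : 1 ≤ j+1)]
        simp [Ch_zero_right, Ch_zero_left]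
      · intro l _ hl
        rw [show Ch 0 l = 0 from Ch_zero_left (by omega)]
        simp
      · intro h; simp at h
    | succ e ihe =>
      intro B n
      -- Split the top term and apply Pascal (first slot) to the inner `Ch`.
      have expand1 : ∀ l ∈ Finset.range (j+1),
          (-1:ℤ)^l * (Ch (e+1) l : ℤ) * (Ch (e+1+l) (j+1-l) : ℤ) * Cb (((B + (j+1-l) : ℕ)) : ℤ) (n - l)
          = (-1:ℤ)^l * (Ch (e+1) l : ℤ) * (Ch (e+1+l) (j-l) : ℤ) * Cb ((((B+1) + (j-l) : ℕ)) : ℤ) (n - l)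
            + (-1:ℤ)^l * (Ch (e+1) l : ℤ) * (Ch (e+l) (j+1-l) : ℤ) * Cb (((B + (j+1-l) : ℕ)) : ℤ) (n - l) := by
        intro l hl
        rw [Finset.mem_range] at hl
        have h1 : j + 1 - l = (j - l) + 1 := by omega
        have h2 : e + 1 + l = (e + l) + 1 := by omega
        rw [h1, h2, Ch_pascal_left (e+l) (j-l)]
        have h3 : (B + ((j - l) + 1) : ℕ) = ((B+1) + (j-l) : ℕ) := by omega
        rw [h3]
        push_cast
        ring
      rw [Finset.sum_range_succ, Finset.sum_congr rfl expand1, Finset.sum_add_distrib]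
      rw [ihj (e+1) (B+1) n]
      -- Reabsorb the top term into the second sum.
      have htop : (-1:ℤ)^(j+1) * (Ch (e+1) (j+1) : ℤ) * (Ch (e+1+(j+1)) (j+1-(j+1)) : ℤ)
            * Cb (((B + (j+1-(j+1)) : ℕ)) : ℤ) (n - (j+1 : ℕ))
          = (-1:ℤ)^(j+1) * (Ch (e+1) (j+1) : ℤ) * (Ch (e+(j+1)) (j+1-(j+1)) : ℤ)
            * Cb (((B + (j+1-(j+1)) : ℕ)) : ℤ) (n - (j+1 : ℕ)) := by
        rw [show j+1-(j+1) = 0 by omega, Ch_zero_right, Ch_zero_right]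
      -- Pairing identity for the second sum:
      have hpair : (∑ l ∈ Finset.range (j+1),
            (-1:ℤ)^l * (Ch (e+1) l : ℤ) * (Ch (e+l) (j+1-l) : ℤ) * Cb (((B + (j+1-l) : ℕ)) : ℤ) (n - l))
          + ((-1:ℤ)^(j+1) * (Ch (e+1) (j+1) : ℤ) * (Ch (e+(j+1)) (j+1-(j+1)) : ℤ)
            * Cb (((B + (j+1-(j+1)) : ℕ)) : ℤ) (n - (j+1 : ℕ)))
          + (∑ l ∈ Finset.range (j+1),
            (-1:ℤ)^l * (Ch (e+1) l : ℤ) * (Ch (e+1+l) (j-l) : ℤ) * Cb (((B + (j-l) : ℕ)) : ℤ) ((n-1) - l))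
          = ∑ l ∈ Finset.range (j+2),
            (-1:ℤ)^l * (Ch e l : ℤ) * (Ch (e+l) (j+1-l) : ℤ) * Cb (((B + (j+1-l) : ℕ)) : ℤ) (n - l) := by
        rw [← Finset.sum_range_succ
          (fun l => (-1:ℤ)^l * (Ch (e+1) l : ℤ) * (Ch (e+l) (j+1-l) : ℤ) * Cb (((B + (j+1-l) : ℕ)) : ℤ) (n - l)) (j+1)]
        rw [Finset.sum_range_succ' (fun l =>
          (-1:ℤ)^l * (Ch (e+1) l : ℤ) * (Ch (e+l) (j+1-l) : ℤ) * Cb (((B + (j+1-l) : ℕ)) : ℤ) (n - l)) (j+1)]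
        rw [Finset.sum_range_succ' (fun l =>
          (-1:ℤ)^l * (Ch e l : ℤ) * (Ch (e+l) (j+1-l) : ℤ) * Cb (((B + (j+1-l) : ℕ)) : ℤ) (n - l)) (j+1)]
        have hzero : ((-1:ℤ)^(0:ℕ) * (Ch (e+1) 0 : ℤ) * (Ch (e+0) (j+1-0) : ℤ) * Cb (((B + (j+1-0) : ℕ)) : ℤ) (n - (0:ℕ)))
            = ((-1:ℤ)^(0:ℕ) * (Ch e 0 : ℤ) * (Ch (e+0) (j+1-0) : ℤ) * Cb (((B + (j+1-0) : ℕ)) : ℤ) (n - (0:ℕ))) := by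
          rw [Ch_zero_right, Ch_zero_right]
        rw [hzero]
        have hterm : ∀ l ∈ Finset.range (j+1),
            ((-1:ℤ)^(l+1) * (Ch (e+1) (l+1) : ℤ) * (Ch (e+(l+1)) (j+1-(l+1)) : ℤ) * Cb (((B + (j+1-(l+1)) : ℕ)) : ℤ) (n - ((l+1:ℕ))))
            + ((-1:ℤ)^l * (Ch (e+1) l : ℤ) * (Ch (e+1+l) (j-l) : ℤ) * Cb (((B + (j-l) : ℕ)) : ℤ) ((n-1) - l))
            = (-1:ℤ)^(l+1) * (Ch e (l+1) : ℤ) * (Ch (e+(l+1)) (j+1-(l+1)) : ℤ) * Cb (((B + (j+1-(l+1)) : ℕ)) : ℤ) (n - ((l+1:ℕ))) := by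
          intro l hl
          rw [Finset.mem_range] at hl
          have h1 : j + 1 - (l+1) = j - l := by omega
          have h2 : e + (l+1) = e + 1 + l := by omega
          have h3 : n - ((l+1:ℕ):ℤ) = (n-1) - l := by omega
          rw [h1, h2, h3, Ch_pascal_right e l]
          push_cast
          ring
        calc (∑ l ∈ Finset.range (j+1),
                (-1:ℤ)^(l+1) * (Ch (e+1) (l+1) : ℤ) * (Ch (e+(l+1)) (j+1-(l+1)) : ℤ) * Cb (((B + (j+1-(l+1)) : ℕ)) : ℤ) (n - ((l+1:ℕ))))
              + ((-1:ℤ)^(0:ℕ) * (Ch e 0 : ℤ) * (Ch (e+0) (j+1-0) : ℤ) * Cb (((B + (j+1-0) : ℕ)) : ℤ) (n - (0:ℕ)))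
              + (∑ l ∈ Finset.range (j+1),
                (-1:ℤ)^l * (Ch (e+1) l : ℤ) * (Ch (e+1+l) (j-l) : ℤ) * Cb (((B + (j-l) : ℕ)) : ℤ) ((n-1) - l))
            = (∑ l ∈ Finset.range (j+1),
                ((-1:ℤ)^(l+1) * (Ch (e+1) (l+1) : ℤ) * (Ch (e+(l+1)) (j+1-(l+1)) : ℤ) * Cb (((B + (j+1-(l+1)) : ℕ)) : ℤ) (n - ((l+1:ℕ)))
                + (-1:ℤ)^l * (Ch (e+1) l : ℤ) * (Ch (e+1+l) (j-l) : ℤ) * Cb (((B + (j-l) : ℕ)) : ℤ) ((n-1) - l)))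
              + ((-1:ℤ)^(0:ℕ) * (Ch e 0 : ℤ) * (Ch (e+0) (j+1-0) : ℤ) * Cb (((B + (j+1-0) : ℕ)) : ℤ) (n - (0:ℕ))) := by
              rw [Finset.sum_add_distrib]; ring
          _ = (∑ l ∈ Finset.range (j+1),
                (-1:ℤ)^(l+1) * (Ch e (l+1) : ℤ) * (Ch (e+(l+1)) (j+1-(l+1)) : ℤ) * Cb (((B + (j+1-(l+1)) : ℕ)) : ℤ) (n - ((l+1:ℕ))))
              + ((-1:ℤ)^(0:ℕ) * (Ch e 0 : ℤ) * (Ch (e+0) (j+1-0) : ℤ) * Cb (((B + (j+1-0) : ℕ)) : ℤ) (n - (0:ℕ))) := by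
              rw [Finset.sum_congr rfl hterm]
      -- Put the pieces together.
      have hB2 : (∑ l ∈ Finset.range (j+1),
            (-1:ℤ)^l * (Ch (e+1) l : ℤ) * (Ch (e+1+l) (j-l) : ℤ) * Cb (((B + (j-l) : ℕ)) : ℤ) ((n-1) - l))
          = (Ch (e+1) j : ℤ) * Cb (B : ℤ) (n-1) := ihj (e+1) B (n-1)
      have hB1 : (∑ l ∈ Finset.range (j+2),
            (-1:ℤ)^l * (Ch e l : ℤ) * (Ch (e+l) (j+1-l) : ℤ) * Cb (((B + (j+1-l) : ℕ)) : ℤ) (n - l))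
          = (Ch e (j+1) : ℤ) * Cb (B : ℤ) n := ihe B n
      rw [htop]
      have hfinal : (∑ l ∈ Finset.range (j+1),
            (-1:ℤ)^l * (Ch (e+1) l : ℤ) * (Ch (e+l) (j+1-l) : ℤ) * Cb (((B + (j+1-l) : ℕ)) : ℤ) (n - l))
          + ((-1:ℤ)^(j+1) * (Ch (e+1) (j+1) : ℤ) * (Ch (e+(j+1)) (j+1-(j+1)) : ℤ)
            * Cb (((B + (j+1-(j+1)) : ℕ)) : ℤ) (n - (j+1 : ℕ)))
          = (Ch e (j+1) : ℤ) * Cb (B : ℤ) n - (Ch (e+1) j : ℤ) * Cb (B : ℤ) (n-1) := by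
        rw [← hB1, ← hpair, hB2]; ring
      have hPa : Cb ((B+1 : ℕ) : ℤ) n = Cb (B : ℤ) n + Cb (B : ℤ) (n-1) := by
        rw [show ((B+1 : ℕ) : ℤ) = ((B:ℤ)+1) by push_cast; ring]
        exact Cb_pascal B n
      have hCh : (Ch (e+1) (j+1) : ℤ) = (Ch e (j+1) : ℤ) + (Ch (e+1) j : ℤ) := by
        rw [Ch_pascal_right e j]; push_cast; ring
      linear_combination hfinal + (Ch (e+1) j : ℤ) * hPa - hCh * Cb (B:ℤ) n

/-! ### Hockey stick -/

lemma hockey (e t : ℕ) : ∑ m ∈ Finset.range (t+1), Ch e m = (e + t).choose t := by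
  induction t with
  | zero => simp [Ch_zero_right]
  | succ t ih =>
    rw [Finset.sum_range_succ, ih]
    have h1 : Ch e (t+1) = (e + t).choose (t+1) := by unfold Ch; congr 1 <;> omega
    rw [h1, show e + (t+1) = (e+t)+1 by omega, Nat.choose_succ_succ' (e+t) t]

/-! ### Lemma C -/

lemma lemC (t a e : ℕ) (n : ℤ) :
    (∑ i ∈ Finset.range (t+1), (Ch e i : ℤ) * Cb (((a:ℤ)) + i) n)
      + (∑ i ∈ Finset.range (t+1), (Ch (e+1) i : ℤ) * Cb (((a:ℤ)) + i) (n - 1))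
    = ((e + t).choose t : ℤ) * Cb ((a:ℤ) + t + 1) n := by
  induction t with
  | zero =>
    simp only [zero_add, Finset.sum_range_one, Nat.cast_zero, add_zero, Ch_zero_right,
      Nat.cast_one, one_mul, Nat.add_zero, Nat.choose_zero_right]
    rw [Cb_pascal a n]
  | succ t ih =>
    have hc1 : ((a:ℤ) + ((t+1:ℕ):ℤ)) = (a:ℤ) + t + 1 := by push_cast; ring
    rw [Finset.sum_range_succ (fun i => (Ch e i : ℤ) * Cb ((a:ℤ) + i) n) (t+1),
      Finset.sum_range_succ (fun i => (Ch (e+1) i : ℤ) * Cb ((a:ℤ) + i) (n-1)) (t+1),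
      hc1]
    have hP : Cb ((a:ℤ) + t + 1 + 1) n = Cb ((a:ℤ) + t + 1) n + Cb ((a:ℤ) + t + 1) (n-1) := by
      have h := Cb_pascal (a+t+1) n
      push_cast at h
      convert h using 2 <;> push_cast <;> ring
    have hch1 : ((e + (t+1)).choose (t+1) : ℤ) = ((e+t).choose t : ℤ) + (Ch e (t+1) : ℤ) := by
      rw [show e + (t+1) = (e+t)+1 by omega, Nat.choose_succ_succ' (e+t) t]
      have : Ch e (t+1) = (e+t).choose (t+1) := by unfold Ch; congr 1 <;> omega
      rw [this]; push_cast; try ring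
    have hch2 : (Ch (e+1) (t+1) : ℤ) = ((e + (t+1)).choose (t+1) : ℤ) := by
      have : Ch (e+1) (t+1) = (e+t+1).choose (t+1) := by unfold Ch; congr 1 <;> omega
      rw [this, show e + (t+1) = e+t+1 by omega]
    rw [hch2, hch1, hP]
    linear_combination ih

/-- **Property 3.** `F_t(a,s,0,n) + F_t(a,s,0,n−1) = F_t(a+t+1,s,s−n−3,n)`
for `n ≥ 1` and `s ≥ n+3`. -/
theorem stmt_16 (t a s n : ℕ) (hn : 1 ≤ n) (hs : n + 3 ≤ s) :
    Fb t (a : ℤ) s 0 (n : ℤ) + Fb t (a : ℤ) s 0 ((n : ℤ) - 1) =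
      Fb t ((a : ℤ) + t + 1) s (s - n - 3) (n : ℤ) := by
  have he : ((s - n - 3 : ℕ) : ℤ) = (s:ℤ) - n - 3 := by omega
  set e := s - n - 3 with hedef
  -- LHS
  rw [Fb_eps_zero, Fb_eps_zero]
  rw [Gg_eq_sum_Ch t (a:ℤ) s e (n:ℤ) (by omega)]
  rw [Gg_eq_sum_Ch t (a:ℤ) s (e+1) ((n:ℤ)-1) (by push_cast; omega)]
  rw [lemC t a e (n:ℤ)]
  -- RHS
  rw [Fb_inv t ((a:ℤ) + t + 1) s e (n:ℤ)]
  have hGg : ∀ j ∈ Finset.range (t+1),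
      (-1:ℤ)^j * (Ch e j : ℤ) * Gg (t - j) ((a:ℤ) + t + 1) s ((n:ℤ) - j)
      = ∑ i ∈ Finset.range ((t+1) - j),
          (-1:ℤ)^j * (Ch e j : ℤ) * ((Ch (e+j) i : ℤ) * Cb (((a:ℤ) + t + 1) + i) ((n:ℤ) - j)) := by
    intro j hj
    rw [Finset.mem_range] at hj
    rw [Gg_eq_sum_Ch (t - j) ((a:ℤ) + t + 1) s (e+j) ((n:ℤ) - j) (by push_cast; omega)]
    rw [Finset.mul_sum, show (t - j) + 1 = (t+1) - j by omega]
  rw [Finset.sum_congr rfl hGg]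
  rw [← Finset.sum_range_diag_flip (t+1)
    (fun j i => (-1:ℤ)^j * (Ch e j : ℤ) * ((Ch (e+j) i : ℤ) * Cb (((a:ℤ) + t + 1) + i) ((n:ℤ) - j)))]
  have hm : ∀ m ∈ Finset.range (t+1),
      (∑ k ∈ Finset.range (m+1),
        (-1:ℤ)^k * (Ch e k : ℤ) * ((Ch (e+k) (m-k) : ℤ) * Cb (((a:ℤ) + t + 1) + ((m-k:ℕ):ℤ)) ((n:ℤ) - k)))
      = (Ch e m : ℤ) * Cb (((a+t+1 : ℕ)):ℤ) (n:ℤ) := by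
    intro m hmr
    have hb : ∀ k ∈ Finset.range (m+1),
        (-1:ℤ)^k * (Ch e k : ℤ) * ((Ch (e+k) (m-k) : ℤ) * Cb (((a:ℤ) + t + 1) + ((m-k:ℕ):ℤ)) ((n:ℤ) - k))
        = (-1:ℤ)^k * (Ch e k : ℤ) * (Ch (e+k) (m-k) : ℤ) * Cb ((((a+t+1) + (m-k) : ℕ)):ℤ) ((n:ℤ) - k) := by
      intro k _
      rw [show ((((a+t+1) + (m-k) : ℕ)):ℤ) = ((a:ℤ) + t + 1) + ((m-k:ℕ):ℤ) by push_cast; ring]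
      ring
    rw [Finset.sum_congr rfl hb]
    exact lemB m e (a+t+1) (n:ℤ)
  rw [Finset.sum_congr rfl hm, ← Finset.sum_mul]
  have hh : (∑ m ∈ Finset.range (t+1), (Ch e m : ℤ)) = ((e+t).choose t : ℤ) := by
    rw [← Nat.cast_sum, hockey]
  rw [hh, show (((a+t+1 : ℕ)):ℤ) = (a:ℤ) + t + 1 by push_cast; ring]

end
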